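/- Let D ⊆ ℝ be closed and f, h : D → ℝ continuous with f' = h in the strong sense. Then there exist continuous functions F, H : ℝ → ℝ with F extending f, H extending h, and F differentiable everywhere with F' = H. -/

import Mathlib

open Set intervalIntegral
open scoped Classical

/-- `f' = h` in the strong sense on `D`. -/
def StrongDerivOn (D : Set ℝ) (f h : ℝ → ℝ) : Prop :=
  ∀ x ∈ D, ∀ ε > 0, ∃ δ > 0, ∀ x1 ∈ D, ∀ x2 ∈ D, x1 ≠ x2 →
    |x1 - x| < δ → |x2 - x| < δ → |(f x2 - f x1) / (x2 - x1) - h x| < ε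

namespace Stmt3

noncomputable def gapFun (f h : ℝ → ℝ) (α β t : ℝ) : ℝ :=
  h α + (h β - h α) * ((t - α) / (β - α)) +
    6 * ((f β - f α) / (β - α) - (h α + h β) / 2) *
      (((t - α) / (β - α)) * (1 - (t - α) / (β - α)))

noncomputable def Hd (D : Set ℝ) (f h : ℝ → ℝ) (t : ℝ) : ℝ :=
  if t ∈ D then h t
  else if (D ∩ Iic t).Nonempty then
    if (D ∩ Ici t).Nonempty then gapFun f h (sSup (D ∩ Iic t)) (sInf (D ∩ Ici t)) t
    else h (sSup D)
  else if (D ∩ Ici t).Nonempty then h (sInf D)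
  else 0

def IsGap (D : Set ℝ) (α β : ℝ) : Prop :=
  α ∈ D ∧ β ∈ D ∧ α < β ∧ D ∩ Ioo α β = ∅

variable {D : Set ℝ} {f h : ℝ → ℝ} {t x α β ε : ℝ}

lemma sSup_mem_inter (hD : IsClosed D) (hA : (D ∩ Iic t).Nonempty) :
    sSup (D ∩ Iic t) ∈ D ∩ Iic t :=
  (hD.inter isClosed_Iic).csSup_mem hA ⟨t, fun _ hy => hy.2⟩

lemma sInf_mem_inter (hD : IsClosed D) (hB : (D ∩ Ici t).Nonempty) :
    sInf (D ∩ Ici t) ∈ D ∩ Ici t :=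
  (hD.inter isClosed_Ici).csInf_mem hB ⟨t, fun _ hy => hy.2⟩

lemma gap_of_notMem (hD : IsClosed D) (ht : t ∉ D) (hA : (D ∩ Iic t).Nonempty)
    (hB : (D ∩ Ici t).Nonempty) :
    IsGap D (sSup (D ∩ Iic t)) (sInf (D ∩ Ici t)) ∧
      sSup (D ∩ Iic t) < t ∧ t < sInf (D ∩ Ici t) := by
  obtain ⟨hαD, hαt⟩ := sSup_mem_inter hD hA
  obtain ⟨hβD, hβt⟩ := sInf_mem_inter hD hB
  have hαlt : sSup (D ∩ Iic t) < t := lt_of_le_of_ne hαt (fun e => ht (e ▸ hαD))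
  have hβgt : t < sInf (D ∩ Ici t) := lt_of_le_of_ne hβt (fun e => ht (e.symm ▸ hβD))
  refine ⟨⟨hαD, hβD, hαlt.trans hβgt, ?_⟩, hαlt, hβgt⟩
  ext y; simp only [mem_inter_iff, mem_Ioo, mem_empty_iff_false, iff_false, not_and]
  intro hyD hy1
  rcases le_or_gt y t with hyt | hyt
  · have : y ≤ sSup (D ∩ Iic t) := le_csSup ⟨t, fun _ hz => hz.2⟩ (⟨hyD, hyt⟩ : y ∈ D ∩ Iic t)
    exact absurd this (not_le.2 hy1)
  · intro hy2
    have : sInf (D ∩ Ici t) ≤ y := csInf_le ⟨t, fun _ hz => hz.2⟩ (⟨hyD, hyt.le⟩ : y ∈ D ∩ Ici t)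
    exact absurd this (not_le.2 hy2)

lemma mem_gap_notMem (hg : IsGap D α β) (ht : t ∈ Ioo α β) : t ∉ D := fun hmem =>
  (eq_empty_iff_forall_notMem.1 hg.2.2.2 t) ⟨hmem, ht⟩

lemma sSup_eq_of_gap (hg : IsGap D α β) (ht : t ∈ Ioo α β) :
    (D ∩ Iic t).Nonempty ∧ sSup (D ∩ Iic t) = α := by
  have hA : (D ∩ Iic t).Nonempty := ⟨α, hg.1, ht.1.le⟩
  refine ⟨hA, le_antisymm (csSup_le hA ?_) (le_csSup ⟨t, fun _ hz => hz.2⟩ ⟨hg.1, ht.1.le⟩)⟩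
  rintro y ⟨hyD, hyt⟩
  by_contra hy
  exact (eq_empty_iff_forall_notMem.1 hg.2.2.2 y) ⟨hyD, not_le.1 hy, lt_of_le_of_lt hyt ht.2⟩

lemma sInf_eq_of_gap (hg : IsGap D α β) (ht : t ∈ Ioo α β) :
    (D ∩ Ici t).Nonempty ∧ sInf (D ∩ Ici t) = β := by
  have hB : (D ∩ Ici t).Nonempty := ⟨β, hg.2.1, ht.2.le⟩
  refine ⟨hB, le_antisymm (csInf_le ⟨t, fun _ hz => hz.2⟩ ⟨hg.2.1, ht.2.le⟩) (le_csInf hB ?_)⟩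
  rintro y ⟨hyD, hyt⟩
  by_contra hy
  exact (eq_empty_iff_forall_notMem.1 hg.2.2.2 y) ⟨hyD, lt_of_lt_of_le ht.1 hyt, not_le.1 hy⟩

lemma Hd_eq_gapFun (hg : IsGap D α β) (ht : t ∈ Ioo α β) :
    Hd D f h t = gapFun f h α β t := by
  have h1 := sSup_eq_of_gap hg ht
  have h2 := sInf_eq_of_gap hg ht
  rw [Hd, if_neg (mem_gap_notMem hg ht), if_pos h1.1, if_pos h2.1, h1.2, h2.2]

lemma gapFun_left (hαβ : α < β) : gapFun f h α β α = h α := by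
  simp [gapFun]

lemma gapFun_right (hαβ : α < β) : gapFun f h α β β = h β := by
  rw [gapFun, div_self (sub_ne_zero.2 hαβ.ne')]
  ring

lemma Hd_eq_self (hx : x ∈ D) : Hd D f h x = h x := by rw [Hd, if_pos hx]

lemma Hd_eqOn_gap (hg : IsGap D α β) : EqOn (Hd D f h) (gapFun f h α β) (Icc α β) := by
  intro t ht
  rcases eq_or_lt_of_le ht.1 with rfl | h1
  · rw [Hd_eq_self hg.1, gapFun_left hg.2.2.1]
  rcases eq_or_lt_of_le ht.2 with rfl | h2
  · rw [Hd_eq_self hg.2.1, gapFun_right hg.2.2.1]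
  exact Hd_eq_gapFun hg ⟨h1, h2⟩


lemma est_aux {a b d s ε : ℝ} (hs0 : 0 ≤ s) (hs1 : s ≤ 1)
    (h1 : |a| < ε) (h2 : |b| < ε) (h3 : |d| < ε) :
    |a * (1 - s) + b * s + 6 * (d - (a + b) / 2) * (s * (1 - s))| ≤ 4 * ε := by
  rw [abs_lt] at h1 h2 h3
  obtain ⟨h1a, h1b⟩ := h1; obtain ⟨h2a, h2b⟩ := h2; obtain ⟨h3a, h3b⟩ := h3
  have hε : 0 < ε := by linarith
  have hu0 : 0 ≤ s * (1 - s) := mul_nonneg hs0 (by linarith)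
  have hu4 : s * (1 - s) ≤ 1 / 4 := by nlinarith [sq_nonneg (s - 1/2)]
  have P1 : 0 ≤ (ε - a) * (1 - s) := mul_nonneg (by linarith) (by linarith)
  have P2 : 0 ≤ (ε + a) * (1 - s) := mul_nonneg (by linarith) (by linarith)
  have P3 : 0 ≤ (ε - b) * s := mul_nonneg (by linarith) hs0
  have P4 : 0 ≤ (ε + b) * s := mul_nonneg (by linarith) hs0
  have P5 : 0 ≤ (2 * ε - (d - (a + b) / 2)) * (s * (1 - s)) := mul_nonneg (by linarith) hu0
  have P6 : 0 ≤ (2 * ε + (d - (a + b) / 2)) * (s * (1 - s)) := mul_nonneg (by linarith) hu0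
  have P7 : 0 ≤ (1 / 4 - s * (1 - s)) * (12 * ε) := mul_nonneg (by linarith) (by linarith)
  rw [abs_le]
  constructor <;> linarith [P1, P2, P3, P4, P5, P6, P7]

lemma gapFun_est (hαt : α ≤ t) (htβ : t ≤ β) (hαβ : α < β)
    (h1 : |h α - h x| < ε) (h2 : |h β - h x| < ε)
    (h3 : |(f β - f α) / (β - α) - h x| < ε) :
    |gapFun f h α β t - h x| ≤ 4 * ε := by
  have hs0 : 0 ≤ (t - α) / (β - α) := div_nonneg (by linarith) (by linarith)
  have hs1 : (t - α) / (β - α) ≤ 1 := (div_le_one (by linarith)).2 (by linarith)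
  have hE : gapFun f h α β t - h x
      = (h α - h x) * (1 - (t - α) / (β - α)) + (h β - h x) * ((t - α) / (β - α))
        + 6 * (((f β - f α) / (β - α) - h x) - ((h α - h x) + (h β - h x)) / 2)
          * (((t - α) / (β - α)) * (1 - (t - α) / (β - α))) := by
    simp only [gapFun]; ring
  rw [hE]
  exact est_aux hs0 hs1 h1 h2 h3

lemma gapFun_left_est (hαt : α ≤ t) (htβ : t ≤ β) (hαβ : α < β) :
    |gapFun f h α β t - h α| ≤ ((t - α) / (β - α)) *
      (|h β - h α| + 6 * |(f β - f α) / (β - α) - (h α + h β) / 2|) := by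
  set s : ℝ := (t - α) / (β - α) with hs
  have hs0 : 0 ≤ s := div_nonneg (by linarith) (by linarith)
  have hs1 : s ≤ 1 := (div_le_one (by linarith)).2 (by linarith)
  set b := h β - h α
  set c := (f β - f α) / (β - α) - (h α + h β) / 2
  have hE : gapFun f h α β t - h α = b * s + 6 * c * (s * (1 - s)) := by
    simp only [gapFun, b, c]; ring
  rw [hE]
  calc |b * s + 6 * c * (s * (1 - s))| ≤ |b * s| + |6 * c * (s * (1 - s))| := abs_add_le _ _
    _ ≤ |b| * s + 6 * |c| * s := by
        rw [abs_mul, abs_mul, abs_mul, abs_of_nonneg hs0, abs_of_nonneg (mul_nonneg hs0 (by linarith))]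
        have : |(6:ℝ)| = 6 := by norm_num
        rw [this]
        have h6 : 6 * |c| * (s * (1 - s)) ≤ 6 * |c| * s := by
          apply mul_le_mul_of_nonneg_left _ (by positivity)
          nlinarith
        linarith [h6]
    _ = s * (|b| + 6 * |c|) := by ring

lemma gapFun_right_est (hαt : α ≤ t) (htβ : t ≤ β) (hαβ : α < β) :
    |gapFun f h α β t - h β| ≤ ((β - t) / (β - α)) *
      (|h β - h α| + 6 * |(f β - f α) / (β - α) - (h α + h β) / 2|) := by
  have hL : (β - α) ≠ 0 := sub_ne_zero.2 hαβ.ne'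
  set s : ℝ := (t - α) / (β - α) with hs
  have hs0 : 0 ≤ s := div_nonneg (by linarith) (by linarith)
  have hs1 : s ≤ 1 := (div_le_one (by linarith)).2 (by linarith)
  have hs' : (β - t) / (β - α) = 1 - s := by
    rw [hs, eq_sub_iff_add_eq, ← add_div, div_eq_one_iff_eq hL]; ring
  set b := h β - h α
  set c := (f β - f α) / (β - α) - (h α + h β) / 2
  have hE : gapFun f h α β t - h β = -(b * (1 - s)) + 6 * c * (s * (1 - s)) := by
    simp only [gapFun, b, c]; ring
  rw [hE, hs']
  calc |-(b * (1 - s)) + 6 * c * (s * (1 - s))| ≤ |-(b * (1 - s))| + |6 * c * (s * (1 - s))| := abs_add_le _ _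
    _ ≤ |b| * (1 - s) + 6 * |c| * (1 - s) := by
        rw [abs_neg, abs_mul, abs_mul, abs_mul, abs_of_nonneg (by linarith : (0:ℝ) ≤ 1 - s),
          abs_of_nonneg (mul_nonneg hs0 (by linarith))]
        have : |(6:ℝ)| = 6 := by norm_num
        rw [this]
        have h6 : 6 * |c| * (s * (1 - s)) ≤ 6 * |c| * (1 - s) := by
          apply mul_le_mul_of_nonneg_left _ (by positivity)
          nlinarith
        linarith [h6]
    _ = (1 - s) * (|b| + 6 * |c|) := by ring


lemma bddA : BddAbove (D ∩ Iic t) := ⟨t, fun _ hz => hz.2⟩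
lemma bddB : BddBelow (D ∩ Ici t) := ⟨t, fun _ hz => hz.2⟩

lemma key (hD : IsClosed D) (hne : D.Nonempty) (hh : ContinuousOn h D)
    (hfh : StrongDerivOn D f h) (hx : x ∈ D) (hε : 0 < ε) :
    ∃ δ > 0, ∀ t, |t - x| < δ → |Hd D f h t - h x| < ε := by
  have hε5 : 0 < ε / 5 := by linarith
  obtain ⟨δ₁, hδ₁, hδ₁'⟩ := Metric.continuousWithinAt_iff.1 (hh x hx) (ε / 5) hε5
  obtain ⟨δ₂, hδ₂, hδ₂'⟩ := hfh x hx (ε / 5) hε5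
  have hδ₀ : 0 < min δ₁ δ₂ := lt_min hδ₁ hδ₂
  set δ₀ := min δ₁ δ₂ with hδ₀def
  have hcont : ∀ y ∈ D, |y - x| < δ₀ → |h y - h x| < ε / 5 := by
    intro y hy hyx
    have := hδ₁' hy (by rw [Real.dist_eq]; exact hyx.trans_le (min_le_left _ _))
    rwa [Real.dist_eq] at this
  have main : ∀ a b t', a ∈ D → b ∈ D → a ≤ t' → t' ≤ b → a < b →
      |a - x| < δ₀ → |b - x| < δ₀ → |gapFun f h a b t' - h x| < ε := by
    intro a b t' ha hb h1 h2 h3 h4 h5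
    have e1 : |h a - h x| < ε / 5 := hcont a ha h4
    have e2 : |h b - h x| < ε / 5 := hcont b hb h5
    have e3 : |(f b - f a) / (b - a) - h x| < ε / 5 :=
      hδ₂' a ha b hb h3.ne (h4.trans_le (min_le_right _ _)) (h5.trans_le (min_le_right _ _))
    have := gapFun_est h1 h2 h3 e1 e2 e3
    linarith
  have right : ∃ δ > 0, ∀ t, x < t → t - x < δ → |Hd D f h t - h x| < ε := by
    by_cases hR : (D ∩ Ioi x).Nonempty
    · by_cases hacc : (D ∩ Ioo x (x + δ₀)).Nonempty
      · obtain ⟨p, hpD, hp1, hp2⟩ := hacc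
        refine ⟨p - x, by linarith, fun t ht1 ht2 => ?_⟩
        by_cases htD : t ∈ D
        · rw [Hd_eq_self htD]
          have := hcont t htD (by rw [abs_of_pos (by linarith : (0:ℝ) < t - x)]; linarith)
          linarith
        · have hA : (D ∩ Iic t).Nonempty := ⟨x, hx, ht1.le⟩
          have hB : (D ∩ Ici t).Nonempty := ⟨p, hpD, by simp only [mem_Ici]; linarith⟩
          obtain ⟨hgap, hαt, htβ⟩ := gap_of_notMem hD htD hA hB
          rw [Hd, if_neg htD, if_pos hA, if_pos hB]
          have hαx : x ≤ sSup (D ∩ Iic t) := le_csSup bddA ⟨hx, ht1.le⟩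
          have hβp : sInf (D ∩ Ici t) ≤ p := csInf_le bddB ⟨hpD, by simp only [mem_Ici]; linarith⟩
          apply main _ _ t hgap.1 hgap.2.1 hαt.le htβ.le hgap.2.2.1
          · rw [abs_of_nonneg (by linarith)]; linarith
          · rw [abs_of_pos (by linarith)]; linarith
      · obtain ⟨q, hqD, hqx⟩ := hR
        have hq' : x + δ₀ ≤ q := by
          by_contra hc
          exact hacc ⟨q, hqD, hqx, not_le.1 hc⟩
        have hβ₀ := (hD.inter isClosed_Ici).csInf_mem (⟨q, hqD, hq'⟩ : (D ∩ Ici (x + δ₀)).Nonempty)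
          ⟨x + δ₀, fun _ hy => hy.2⟩
        set β₀ := sInf (D ∩ Ici (x + δ₀)) with hβ₀def
        have hβ₀x : x < β₀ := by have := hβ₀.2; simp only [mem_Ici] at this; linarith
        have hgap : IsGap D x β₀ := by
          refine ⟨hx, hβ₀.1, hβ₀x, ?_⟩
          ext y; simp only [mem_inter_iff, mem_Ioo, mem_empty_iff_false, iff_false, not_and]
          intro hyD hy1 hy2
          rcases lt_or_ge y (x + δ₀) with hy3 | hy3
          · exact hacc ⟨y, hyD, hy1, hy3⟩
          · exact absurd (csInf_le ⟨x + δ₀, fun _ hz => hz.2⟩ (⟨hyD, hy3⟩ : y ∈ D ∩ Ici (x + δ₀)))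
              (not_le.2 hy2)
        set K := |h β₀ - h x| + 6 * |(f β₀ - f x) / (β₀ - x) - (h x + h β₀) / 2| with hK
        have hK0 : 0 ≤ K := by positivity
        refine ⟨min (β₀ - x) ((β₀ - x) * ε / (K + 1)),
          lt_min (by linarith) (div_pos (mul_pos (by linarith) hε) (by linarith)),
          fun t ht1 ht2 => ?_⟩
        have htβ : t < β₀ := by
          have := lt_of_lt_of_le ht2 (min_le_left _ _); linarith
        rw [Hd_eq_gapFun hgap ⟨ht1, htβ⟩]
        have hest := gapFun_left_est (f := f) (h := h) ht1.le htβ.le hβ₀x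
        rw [← hK] at hest
        have ht2' : t - x < (β₀ - x) * ε / (K + 1) := lt_of_lt_of_le ht2 (min_le_right _ _)
        have hfrac : (t - x) / (β₀ - x) * K < ε := by
          rw [div_mul_eq_mul_div, div_lt_iff₀ (by linarith : (0:ℝ) < β₀ - x)]
          have hstep : (t - x) * K ≤ (t - x) * (K + 1) := by nlinarith
          have h2 : (t - x) * (K + 1) < (β₀ - x) * ε / (K + 1) * (K + 1) :=
            mul_lt_mul_of_pos_right ht2' (by linarith)
          rw [div_mul_cancel₀ _ (by linarith : K + 1 ≠ 0)] at h2
          linarith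
        linarith
    · refine ⟨1, one_pos, fun t ht1 ht2 => ?_⟩
      have htD : t ∉ D := fun hmem => hR ⟨t, hmem, ht1⟩
      have hA : (D ∩ Iic t).Nonempty := ⟨x, hx, ht1.le⟩
      have hB : ¬(D ∩ Ici t).Nonempty := by
        rintro ⟨y, hyD, hyt⟩
        exact hR ⟨y, hyD, lt_of_lt_of_le ht1 hyt⟩
      rw [Hd, if_neg htD, if_pos hA, if_neg hB]
      have hsup : sSup D = x := by
        refine le_antisymm (csSup_le hne fun y hy => ?_) (le_csSup ⟨x, fun y hy => ?_⟩ hx)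
        · by_contra hc; exact hR ⟨y, hy, not_le.1 hc⟩
        · by_contra hc; exact hR ⟨y, hy, not_le.1 hc⟩
      rw [hsup]
      simpa using hε
  have left : ∃ δ > 0, ∀ t, t < x → x - t < δ → |Hd D f h t - h x| < ε := by
    by_cases hL : (D ∩ Iio x).Nonempty
    · by_cases hacc : (D ∩ Ioo (x - δ₀) x).Nonempty
      · obtain ⟨p, hpD, hp1, hp2⟩ := hacc
        refine ⟨x - p, by linarith, fun t ht1 ht2 => ?_⟩
        by_cases htD : t ∈ D
        · rw [Hd_eq_self htD]
          have := hcont t htD (by rw [abs_of_neg (by linarith : t - x < 0)]; linarith)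
          linarith
        · have hA : (D ∩ Iic t).Nonempty := ⟨p, hpD, by simp only [mem_Iic]; linarith⟩
          have hB : (D ∩ Ici t).Nonempty := ⟨x, hx, ht1.le⟩
          obtain ⟨hgap, hαt, htβ⟩ := gap_of_notMem hD htD hA hB
          rw [Hd, if_neg htD, if_pos hA, if_pos hB]
          have hpα : p ≤ sSup (D ∩ Iic t) := le_csSup bddA ⟨hpD, by simp only [mem_Iic]; linarith⟩
          have hβx : sInf (D ∩ Ici t) ≤ x := csInf_le bddB ⟨hx, ht1.le⟩
          apply main _ _ t hgap.1 hgap.2.1 hαt.le htβ.le hgap.2.2.1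
          · rw [abs_of_neg (by linarith)]; linarith
          · rw [abs_of_nonpos (by linarith)]; linarith
      · obtain ⟨q, hqD, hqx⟩ := hL
        have hq' : q ≤ x - δ₀ := by
          by_contra hc
          exact hacc ⟨q, hqD, not_le.1 hc, hqx⟩
        have hα₀ := (hD.inter isClosed_Iic).csSup_mem (⟨q, hqD, hq'⟩ : (D ∩ Iic (x - δ₀)).Nonempty)
          ⟨x - δ₀, fun _ hy => hy.2⟩
        set α₀ := sSup (D ∩ Iic (x - δ₀)) with hα₀def
        have hα₀x : α₀ < x := by have := hα₀.2; simp only [mem_Iic] at this; linarith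
        have hgap : IsGap D α₀ x := by
          refine ⟨hα₀.1, hx, hα₀x, ?_⟩
          ext y; simp only [mem_inter_iff, mem_Ioo, mem_empty_iff_false, iff_false, not_and]
          intro hyD hy1 hy2
          rcases le_or_gt y (x - δ₀) with hy3 | hy3
          · exact absurd (le_csSup ⟨x - δ₀, fun _ hz => hz.2⟩ (⟨hyD, hy3⟩ : y ∈ D ∩ Iic (x - δ₀)))
              (not_le.2 hy1)
          · exact hacc ⟨y, hyD, hy3, hy2⟩
        set K := |h x - h α₀| + 6 * |(f x - f α₀) / (x - α₀) - (h α₀ + h x) / 2| with hK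
        have hK0 : 0 ≤ K := by positivity
        refine ⟨min (x - α₀) ((x - α₀) * ε / (K + 1)),
          lt_min (by linarith) (div_pos (mul_pos (by linarith) hε) (by linarith)),
          fun t ht1 ht2 => ?_⟩
        have htα : α₀ < t := by
          have := lt_of_lt_of_le ht2 (min_le_left _ _); linarith
        rw [Hd_eq_gapFun hgap ⟨htα, ht1⟩]
        have hest := gapFun_right_est (f := f) (h := h) htα.le ht1.le hα₀x
        rw [← hK] at hest
        have ht2' : x - t < (x - α₀) * ε / (K + 1) := lt_of_lt_of_le ht2 (min_le_right _ _)
        have hfrac : (x - t) / (x - α₀) * K < ε := by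
          rw [div_mul_eq_mul_div, div_lt_iff₀ (by linarith : (0:ℝ) < x - α₀)]
          have hstep : (x - t) * K ≤ (x - t) * (K + 1) := by nlinarith
          have h2 : (x - t) * (K + 1) < (x - α₀) * ε / (K + 1) * (K + 1) :=
            mul_lt_mul_of_pos_right ht2' (by linarith)
          rw [div_mul_cancel₀ _ (by linarith : K + 1 ≠ 0)] at h2
          linarith
        linarith
    · refine ⟨1, one_pos, fun t ht1 ht2 => ?_⟩
      have htD : t ∉ D := fun hmem => hL ⟨t, hmem, ht1⟩
      have hB : (D ∩ Ici t).Nonempty := ⟨x, hx, ht1.le⟩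
      have hA : ¬(D ∩ Iic t).Nonempty := by
        rintro ⟨y, hyD, hyt⟩
        exact hL ⟨y, hyD, lt_of_le_of_lt hyt ht1⟩
      rw [Hd, if_neg htD, if_neg hA, if_pos hB]
      have hinf : sInf D = x := by
        refine le_antisymm (csInf_le ⟨x, fun y hy => ?_⟩ hx) (le_csInf hne fun y hy => ?_)
        · by_contra hc; exact hL ⟨y, hy, not_le.1 hc⟩
        · by_contra hc; exact hL ⟨y, hy, not_le.1 hc⟩
      rw [hinf]
      simpa using hε
  obtain ⟨δR, hδR, hR'⟩ := right
  obtain ⟨δL, hδL, hL'⟩ := left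
  refine ⟨min δR δL, lt_min hδR hδL, fun t ht => ?_⟩
  rcases lt_trichotomy t x with hc | hc | hc
  · refine hL' t hc ?_
    rw [abs_of_neg (by linarith)] at ht
    linarith [min_le_right δR δL]
  · subst hc; rw [Hd_eq_self hx]; simpa using hε
  · refine hR' t hc ?_
    rw [abs_of_pos (by linarith)] at ht
    linarith [min_le_left δR δL]

lemma gapFun_continuous (hαβ : α < β) : Continuous (gapFun f h α β) := by
  unfold gapFun; fun_prop

lemma Hd_continuous (hD : IsClosed D) (hne : D.Nonempty) (hh : ContinuousOn h D)
    (hfh : StrongDerivOn D f h) : Continuous (Hd D f h) := by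
  rw [continuous_iff_continuousAt]
  intro x
  by_cases hx : x ∈ D
  · rw [Metric.continuousAt_iff]
    intro ε hε
    obtain ⟨δ, hδ, hδ'⟩ := key hD hne hh hfh hx hε
    refine ⟨δ, hδ, fun {t} ht => ?_⟩
    rw [Real.dist_eq, Hd_eq_self hx]
    exact hδ' t (by rwa [Real.dist_eq] at ht)
  · by_cases hA : (D ∩ Iic x).Nonempty
    · by_cases hB : (D ∩ Ici x).Nonempty
      · obtain ⟨hgap, h1, h2⟩ := gap_of_notMem hD hx hA hB
        have hev : Hd D f h =ᶠ[nhds x] gapFun f h (sSup (D ∩ Iic x)) (sInf (D ∩ Ici x)) := by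
          filter_upwards [Ioo_mem_nhds h1 h2] with t ht
          exact Hd_eq_gapFun hgap ht
        exact ((gapFun_continuous hgap.2.2.1).continuousAt).congr hev.symm
      · have hbdd : BddAbove D := ⟨x, fun y hy => by
          by_contra hc; exact hB ⟨y, hy, (not_le.1 hc).le⟩⟩
        have hlt : sSup D < x := by
          have hsD : sSup D ∈ D := hD.csSup_mem hne hbdd
          rcases lt_or_ge (sSup D) x with hc | hc
          · exact hc
          · exact absurd (⟨sSup D, hsD, hc⟩ : (D ∩ Ici x).Nonempty) hB
        have hev : Hd D f h =ᶠ[nhds x] fun _ => h (sSup D) := by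
          filter_upwards [Ioi_mem_nhds hlt] with t ht
          have htD : t ∉ D := fun hm => absurd (le_csSup hbdd hm) (not_le.2 ht)
          obtain ⟨d, hd⟩ := hne
          have hA' : (D ∩ Iic t).Nonempty := ⟨d, hd, le_trans (le_csSup hbdd hd) ht.le⟩
          have hB' : ¬(D ∩ Ici t).Nonempty := by
            rintro ⟨y, hyD, hyt⟩
            exact absurd (le_csSup hbdd hyD) (not_le.2 (lt_of_lt_of_le ht hyt))
          rw [Hd, if_neg htD, if_pos hA', if_neg hB']
        exact continuousAt_const.congr hev.symm
    · have hbdd : BddBelow D := ⟨x, fun y hy => by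
        by_contra hc; exact hA ⟨y, hy, (not_le.1 hc).le⟩⟩
      have hlt : x < sInf D := by
        have hsD : sInf D ∈ D := hD.csInf_mem hne hbdd
        rcases lt_or_ge x (sInf D) with hc | hc
        · exact hc
        · exact absurd (⟨sInf D, hsD, hc⟩ : (D ∩ Iic x).Nonempty) hA
      have hev : Hd D f h =ᶠ[nhds x] fun _ => h (sInf D) := by
        filter_upwards [Iio_mem_nhds hlt] with t ht
        have htD : t ∉ D := fun hm => absurd (csInf_le hbdd hm) (not_le.2 ht)
        obtain ⟨d, hd⟩ := hne
        have hB' : (D ∩ Ici t).Nonempty := ⟨d, hd, le_trans ht.le (csInf_le hbdd hd)⟩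
        have hA' : ¬(D ∩ Iic t).Nonempty := by
          rintro ⟨y, hyD, hyt⟩
          exact absurd (csInf_le hbdd hyD) (not_le.2 (lt_of_le_of_lt hyt ht))
        rw [Hd, if_neg htD, if_neg hA', if_pos hB']
      exact continuousAt_const.congr hev.symm

lemma gapFun_integral (hαβ : α < β) :
    ∫ t in α..β, gapFun f h α β t = f β - f α := by
  have hL : β - α ≠ 0 := sub_ne_zero.2 hαβ.ne'
  set c := (f β - f α) / (β - α) - (h α + h β) / 2 with hc
  set C2 := (h β - h α) / (2 * (β - α)) with hC2
  set C3 := 6 * c / (β - α) ^ 2 with hC3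
  set Q : ℝ → ℝ := fun t => h α * t + C2 * (t - α) ^ 2
    + C3 * ((β - α) / 2 * (t - α) ^ 2 - (t - α) ^ 3 / 3) with hQ
  have hQd : ∀ t, HasDerivAt Q (gapFun f h α β t) t := by
    intro t
    have hid : HasDerivAt (fun u : ℝ => u - α) 1 t := (hasDerivAt_id t).sub_const α
    have h2 : HasDerivAt (fun u : ℝ => (u - α) ^ 2) ((2 : ℕ) * (t - α) ^ 1 * 1) t := hid.pow 2
    have h3 : HasDerivAt (fun u : ℝ => (u - α) ^ 3) ((3 : ℕ) * (t - α) ^ 2 * 1) t := hid.pow 3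
    have hQ1 : HasDerivAt (fun u : ℝ => h α * u) (h α * 1) t := (hasDerivAt_id t).const_mul (h α)
    have hQ2 := h2.const_mul C2
    have hQ3 := ((h2.const_mul ((β - α) / 2)).sub (h3.div_const 3)).const_mul C3
    have htot := (hQ1.add hQ2).add hQ3
    convert htot using 1
    case e'_4 => rfl
    case e'_5 => rfl
    case e'_8 => rfl
    simp only [gapFun, hc, hC2, hC3]
    push_cast
    field_simp
  have hint : ∫ t in α..β, gapFun f h α β t = Q β - Q α :=
    intervalIntegral.integral_eq_sub_of_hasDerivAt (fun t _ => hQd t)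
      ((gapFun_continuous hαβ).intervalIntegrable _ _)
  rw [hint]
  simp only [hQ, hC2, hC3, hc]
  field_simp
  ring

lemma gap_integral (hg : IsGap D α β) :
    ∫ t in α..β, Hd D f h t = f β - f α := by
  rw [intervalIntegral.integral_congr (g := gapFun f h α β) ?_, gapFun_integral hg.2.2.1]
  rw [uIcc_of_le hg.2.2.1.le]
  exact Hd_eqOn_gap hg

lemma F_eq_f (hD : IsClosed D) (hh : ContinuousOn h D) (hfh : StrongDerivOn D f h)
    {x₀ : ℝ} (hx₀ : x₀ ∈ D) (hx : x ∈ D) :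
    f x₀ + ∫ s in x₀..x, Hd D f h s = f x := by
  have hne : D.Nonempty := ⟨x₀, hx₀⟩
  have hHc : Continuous (Hd D f h) := Hd_continuous hD hne hh hfh
  set F : ℝ → ℝ := fun u => ∫ s in x₀..u, Hd D f h s with hF
  have hFsub : ∀ a b : ℝ, F b - F a = ∫ s in a..b, Hd D f h s := by
    intro a b
    have h1 : (∫ s in x₀..a, Hd D f h s) + (∫ s in a..b, Hd D f h s)
        = ∫ s in x₀..b, Hd D f h s :=
      intervalIntegral.integral_add_adjacent_intervals
        (hHc.intervalIntegrable x₀ a) (hHc.intervalIntegrable a b)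
    simp only [hF]
    linarith
  set aD : ℝ → ℝ := fun t => if (D ∩ Iic t).Nonempty then sSup (D ∩ Iic t) else sInf D with haD
  set Φ : ℝ → ℝ := fun t => F (aD t) - f (aD t) with hΦ
  have haD_self : ∀ t ∈ D, aD t = t := by
    intro t ht
    have hA : (D ∩ Iic t).Nonempty := ⟨t, ht, le_refl t⟩
    simp only [haD, if_pos hA]
    exact le_antisymm (csSup_le hA fun y hy => hy.2) (le_csSup bddA ⟨ht, le_refl t⟩)
  have hΦD : ∀ t ∈ D, Φ t = F t - f t := by
    intro t ht; simp only [hΦ]; rw [haD_self t ht]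
  have hgapconst : ∀ a b : ℝ, IsGap D a b → F b - f b = F a - f a := by
    intro a b hg
    have h1 := gap_integral (f := f) (h := h) hg
    have h2 := hFsub a b
    linarith
  have hγ : ∀ y ∈ D, ∀ t : ℝ, ∃ γ ∈ D, |γ - y| ≤ |t - y| ∧ Φ t = F γ - f γ := by
    intro y hy t
    by_cases htD : t ∈ D
    · exact ⟨t, htD, le_refl _, hΦD t htD⟩
    · have hty : t ≠ y := fun e => htD (e ▸ hy)
      by_cases hA : (D ∩ Iic t).Nonempty
      · rcases lt_or_gt_of_ne hty with hlt | hgt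
        · have hB : (D ∩ Ici t).Nonempty := ⟨y, hy, hlt.le⟩
          obtain ⟨hgap, h1, h2⟩ := gap_of_notMem hD htD hA hB
          refine ⟨sInf (D ∩ Ici t), hgap.2.1, ?_, ?_⟩
          · have hβy : sInf (D ∩ Ici t) ≤ y := csInf_le bddB ⟨hy, hlt.le⟩
            rw [abs_of_nonpos (by linarith), abs_of_neg (by linarith)]
            linarith
          · simp only [hΦ, haD, if_pos hA]
            exact (hgapconst _ _ hgap).symm
        · obtain ⟨hαD, hαt⟩ := sSup_mem_inter hD hA
          refine ⟨sSup (D ∩ Iic t), hαD, ?_, by simp only [hΦ, haD, if_pos hA]⟩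
          have hαt' : sSup (D ∩ Iic t) ≤ t := hαt
          have h1 : y ≤ sSup (D ∩ Iic t) := le_csSup bddA ⟨hy, hgt.le⟩
          rw [abs_of_nonneg (by linarith), abs_of_pos (by linarith)]
          linarith
      · have hbdd : BddBelow D := ⟨t, fun z hz => by
          by_contra hc; exact hA ⟨z, hz, (not_le.1 hc).le⟩⟩
        have hiD : sInf D ∈ D := hD.csInf_mem hne hbdd
        have h1 : t < sInf D := by
          rcases lt_or_ge t (sInf D) with hc | hc
          · exact hc
          · exact absurd (⟨sInf D, hiD, hc⟩ : (D ∩ Iic t).Nonempty) hA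
        have h2 : sInf D ≤ y := csInf_le hbdd hy
        refine ⟨sInf D, hiD, ?_, by simp only [hΦ, haD, if_neg hA]⟩
        rw [abs_of_nonpos (by linarith), abs_of_neg (by linarith)]
        linarith
  have hΦ0 : ∀ y : ℝ, HasDerivAt Φ 0 y := by
    intro y
    by_cases hy : y ∈ D
    · rw [hasDerivAt_iff_tendsto_slope, Metric.tendsto_nhdsWithin_nhds]
      intro ε hε
      have hε4 : 0 < ε / 4 := by linarith
      obtain ⟨δ₁, hδ₁, hδ₁'⟩ := key hD hne hh hfh hy hε4
      obtain ⟨δ₂, hδ₂, hδ₂'⟩ := hfh y hy (ε / 4) hε4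
      refine ⟨min δ₁ δ₂, lt_min hδ₁ hδ₂, fun {t} htne htd => ?_⟩
      obtain ⟨γ, hγD, hγle, hγΦ⟩ := hγ y hy t
      rw [Real.dist_eq] at htd
      rw [Real.dist_eq, sub_zero]
      have hty : t ≠ y := htne
      have hΦy : Φ y = F y - f y := hΦD y hy
      have e1 : Φ t - Φ y
          = (∫ s in y..γ, (Hd D f h s - h y)) + (h y * (γ - y) - (f γ - f y)) := by
        rw [hγΦ, hΦy,
          intervalIntegral.integral_sub (hHc.intervalIntegrable y γ) intervalIntegrable_const,
          intervalIntegral.integral_const]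
        have h2 := hFsub y γ
        simp only [smul_eq_mul]
        linarith
      have e2 : |∫ s in y..γ, (Hd D f h s - h y)| ≤ ε / 4 * |γ - y| := by
        have hb := intervalIntegral.norm_integral_le_of_norm_le_const
          (C := ε / 4) (f := fun s => Hd D f h s - h y) (a := y) (b := γ) ?_
        · rwa [Real.norm_eq_abs] at hb
        · intro s hs
          have hsy : |s - y| ≤ |γ - y| := by
            rcases le_total y γ with hl | hl
            · rw [uIoc_of_le hl] at hs
              rw [abs_of_pos (by linarith [hs.1]), abs_of_nonneg (by linarith [hs.1, hs.2])]
              linarith [hs.2]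
            · rw [uIoc_of_ge hl] at hs
              rw [abs_of_nonpos (by linarith [hs.2]), abs_of_nonpos (by linarith [hs.1])]
              linarith [hs.1]
          have h3 : |s - y| < δ₁ :=
            lt_of_le_of_lt (hsy.trans hγle) (htd.trans_le (min_le_left _ _))
          exact (hδ₁' s h3).le
      have e3 : |h y * (γ - y) - (f γ - f y)| ≤ ε / 4 * |γ - y| := by
        rcases eq_or_ne γ y with rfl | hγy
        · simp
        · have h4 : |γ - y| < δ₂ :=
            lt_of_le_of_lt hγle (htd.trans_le (min_le_right _ _))
          have h5 := hδ₂' y hy γ hγD hγy.symm (by simpa using hδ₂) h4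
          have h6 : |h y * (γ - y) - (f γ - f y)|
              = |((f γ - f y) / (γ - y) - h y) * (γ - y)| := by
            rw [sub_mul, div_mul_cancel₀ _ (sub_ne_zero.2 hγy)]
            exact abs_sub_comm _ _
          rw [abs_mul] at h6
          rw [h6]
          exact mul_le_mul_of_nonneg_right h5.le (abs_nonneg _)
      have e4 : |Φ t - Φ y| ≤ ε / 2 * |t - y| := by
        rw [e1]
        calc |(∫ s in y..γ, (Hd D f h s - h y)) + (h y * (γ - y) - (f γ - f y))|
            ≤ |∫ s in y..γ, (Hd D f h s - h y)| + |h y * (γ - y) - (f γ - f y)| := abs_add_le _ _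
          _ ≤ ε / 4 * |γ - y| + ε / 4 * |γ - y| := add_le_add e2 e3
          _ = ε / 2 * |γ - y| := by ring
          _ ≤ ε / 2 * |t - y| := by
              apply mul_le_mul_of_nonneg_left hγle (by linarith)
      have hty0 : 0 < |t - y| := abs_pos.2 (sub_ne_zero.2 hty)
      rw [slope_def_field, abs_div, div_lt_iff₀ hty0]
      calc |Φ t - Φ y| ≤ ε / 2 * |t - y| := e4
        _ < ε * |t - y| := by nlinarith
    · have hev : Φ =ᶠ[nhds y] fun _ => Φ y := by
        by_cases hA : (D ∩ Iic y).Nonempty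
        · by_cases hB : (D ∩ Ici y).Nonempty
          · obtain ⟨hgap, h1, h2⟩ := gap_of_notMem hD hy hA hB
            filter_upwards [Ioo_mem_nhds h1 h2] with t ht
            have ha := sSup_eq_of_gap hgap ht
            have hy' := sSup_eq_of_gap hgap ⟨h1, h2⟩
            simp only [hΦ, haD, if_pos ha.1, if_pos hy'.1, ha.2, hy'.2]
          · have hbdd : BddAbove D := ⟨y, fun z hz => by
              by_contra hc; exact hB ⟨z, hz, (not_le.1 hc).le⟩⟩
            have hlt : sSup D < y := by
              have hsD : sSup D ∈ D := hD.csSup_mem hne hbdd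
              rcases lt_or_ge (sSup D) y with hc | hc
              · exact hc
              · exact absurd (⟨sSup D, hsD, hc⟩ : (D ∩ Ici y).Nonempty) hB
            have hDeq : ∀ t : ℝ, sSup D < t → D ∩ Iic t = D := by
              intro t ht
              exact inter_eq_self_of_subset_left fun d hd => le_trans (le_csSup hbdd hd) ht.le
            have hval : ∀ t : ℝ, sSup D < t → Φ t = F (sSup D) - f (sSup D) := by
              intro t ht
              have hA' : (D ∩ Iic t).Nonempty := by rw [hDeq t ht]; exact hne
              have haDt : aD t = sSup D := by
                have he : aD t = sSup (D ∩ Iic t) := if_pos hA'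
                rw [he, hDeq t ht]
              simp only [hΦ, haDt]
            filter_upwards [Ioi_mem_nhds hlt] with t ht
            rw [hval t ht, hval y hlt]
        · have hbdd : BddBelow D := ⟨y, fun z hz => by
            by_contra hc; exact hA ⟨z, hz, (not_le.1 hc).le⟩⟩
          have hlt : y < sInf D := by
            have hsD : sInf D ∈ D := hD.csInf_mem hne hbdd
            rcases lt_or_ge y (sInf D) with hc | hc
            · exact hc
            · exact absurd (⟨sInf D, hsD, hc⟩ : (D ∩ Iic y).Nonempty) hA
          have hval : ∀ t : ℝ, t < sInf D → Φ t = F (sInf D) - f (sInf D) := by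
            intro t ht
            have hA' : ¬(D ∩ Iic t).Nonempty := by
              rintro ⟨z, hz, hzt⟩
              exact absurd (csInf_le hbdd hz) (not_le.2 (lt_of_le_of_lt hzt ht))
            simp only [hΦ, haD, if_neg hA']
          filter_upwards [Iio_mem_nhds hlt] with t ht
          rw [hval t ht, hval y hlt]
      exact (hev.hasDerivAt_iff).2 (hasDerivAt_const y (Φ y))
  have hconst : Φ x = Φ x₀ :=
    is_const_of_deriv_eq_zero (fun z => (hΦ0 z).differentiableAt) (fun z => (hΦ0 z).deriv) x x₀
  have h1 : Φ x = F x - f x := hΦD x hx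
  have h2 : Φ x₀ = F x₀ - f x₀ := hΦD x₀ hx₀
  have h3 : F x₀ = 0 := by simp only [hF]; exact intervalIntegral.integral_same
  have h4 : F x = ∫ s in x₀..x, Hd D f h s := rfl
  rw [h1, h2, h3, h4] at hconst
  linarith

end Stmt3

theorem stmt_3 (D : Set ℝ) (hD : IsClosed D) (f h : ℝ → ℝ)
    (hf : ContinuousOn f D) (hh : ContinuousOn h D)
    (hfh : StrongDerivOn D f h) :
    ∃ F H : ℝ → ℝ, Continuous F ∧ Continuous H ∧
      (∀ x ∈ D, F x = f x) ∧ (∀ x ∈ D, H x = h x) ∧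
      ∀ x : ℝ, HasDerivAt F (H x) x := by
  rcases D.eq_empty_or_nonempty with rfl | hne
  · exact ⟨fun _ => 0, fun _ => 0, continuous_const, continuous_const,
      fun x hx => absurd hx (Set.notMem_empty x), fun x hx => absurd hx (Set.notMem_empty x),
      fun x => hasDerivAt_const x 0⟩
  · obtain ⟨x₀, hx₀⟩ := hne
    have hHc : Continuous (Stmt3.Hd D f h) := Stmt3.Hd_continuous hD ⟨x₀, hx₀⟩ hh hfh
    have hder : ∀ x : ℝ,
        HasDerivAt (fun u => f x₀ + ∫ s in x₀..u, Stmt3.Hd D f h s) (Stmt3.Hd D f h x) x := by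
      intro x
      have h1 : HasDerivAt (fun u => ∫ s in x₀..u, Stmt3.Hd D f h s) (Stmt3.Hd D f h x) x :=
        intervalIntegral.integral_hasDerivAt_right (hHc.intervalIntegrable _ _)
          (hHc.stronglyMeasurableAtFilter _ _) hHc.continuousAt
      simpa using h1.const_add (f x₀)
    exact ⟨fun u => f x₀ + ∫ s in x₀..u, Stmt3.Hd D f h s, Stmt3.Hd D f h,
      continuous_iff_continuousAt.2 fun x => (hder x).continuousAt, hHc,
      fun x hx => Stmt3.F_eq_f hD hh hfh hx₀ hx,
      fun x hx => Stmt3.Hd_eq_self hx, hder⟩
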